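/- arXiv:2305.00467 — 2 statements merged into one kernel-verified Lean document; each statement's English description precedes it below -/
import Mathlib

section
/- Let G be a graph, S ⊆ V(G), and k ≥ 1 an integer. If the P3 iteration time of S is at least k, then the subgraph H induced by the P3 convex hull of S contains a path v_1, ..., v_k of vertices not in S such that v_1 has at least two neighbors in S, each v_i with 1 ≤ i < k has degree at least 3 in H, and v_k has degree at least 2 in H. -/
def convexHullOf {V : Type*} (I : Set V → Set V) (S : Set V) : Set V :=
  ⋂₀ {T | S ⊆ T ∧ I T ⊆ T}

noncomputable def iterTimeSet {V : Type*} (I : Set V → Set V) (S : Set V) : ℕ :=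
  sInf {k | I^[k] S = convexHullOf I S}

def p3Interval {V : Type*} (G : SimpleGraph V) (S : Set V) : Set V :=
  S ∪ {v | ∃ a ∈ S, ∃ b ∈ S, a ≠ b ∧ G.Adj v a ∧ G.Adj v b}

section Aux

variable {V : Type*} (G : SimpleGraph V) (S : Set V)

lemma subset_p3Interval (T : Set V) : T ⊆ p3Interval G T := Set.subset_union_left

lemma p3Interval_mono {A B : Set V} (h : A ⊆ B) : p3Interval G A ⊆ p3Interval G B := by
  intro v hv
  rcases hv with hv | hv
  · exact Or.inl (h hv)
  · obtain ⟨a, ha, b, hb, hab, h1, h2⟩ := hv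
    exact Or.inr ⟨a, h ha, b, h hb, hab, h1, h2⟩

lemma subset_hull : S ⊆ convexHullOf (p3Interval G) S :=
  Set.subset_sInter fun _ hT => hT.1

lemma p3_hull_closed :
    p3Interval G (convexHullOf (p3Interval G) S) ⊆ convexHullOf (p3Interval G) S := by
  apply Set.subset_sInter
  intro T hT
  exact (p3Interval_mono G (Set.sInter_subset_of_mem hT)).trans hT.2

lemma iter_subset_hull (n : ℕ) :
    (p3Interval G)^[n] S ⊆ convexHullOf (p3Interval G) S := by
  induction n with
  | zero => exact subset_hull G S
  | succ n ih =>
    rw [Function.iterate_succ_apply']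
    exact (p3Interval_mono G ih).trans (p3_hull_closed G S)

lemma iter_mono_succ (n : ℕ) : (p3Interval G)^[n] S ⊆ (p3Interval G)^[n + 1] S := by
  rw [Function.iterate_succ_apply']
  exact subset_p3Interval G _

lemma iter_mono {m n : ℕ} (h : m ≤ n) :
    (p3Interval G)^[m] S ⊆ (p3Interval G)^[n] S := by
  induction h with
  | refl => exact subset_rfl
  | step h ih => exact ih.trans (iter_mono_succ G S _)

lemma exists_iter_eq_hull [Fintype V] :
    ∃ N, (p3Interval G)^[N] S = convexHullOf (p3Interval G) S := by
  have key : ∀ m n : ℕ, m < n → (p3Interval G)^[m] S = (p3Interval G)^[n] S →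
      ∃ N, (p3Interval G)^[N] S = convexHullOf (p3Interval G) S := by
    intro m n hmn he
    have h1 : (p3Interval G)^[m] S = (p3Interval G)^[m + 1] S :=
      subset_antisymm (iter_mono_succ G S m) ((iter_mono G S (by omega)).trans he.ge)
    have hfix : p3Interval G ((p3Interval G)^[m] S) ⊆ (p3Interval G)^[m] S := by
      have h2 := h1.ge
      rw [Function.iterate_succ_apply'] at h2
      exact h2
    refine ⟨m, subset_antisymm (iter_subset_hull G S m) ?_⟩
    exact Set.sInter_subset_of_mem ⟨iter_mono G S (Nat.zero_le m), hfix⟩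
  obtain ⟨m, n, hmn, he⟩ :=
    Finite.exists_ne_map_eq_of_infinite (fun n : ℕ => (p3Interval G)^[n] S)
  rcases lt_or_gt_of_ne hmn with hlt | hlt
  · exact key m n hlt he
  · exact key n m hlt he.symm

lemma step_lemma {m : ℕ} {x : V} (hx : x ∈ (p3Interval G)^[m + 1] S)
    (hx' : x ∉ (p3Interval G)^[m] S) :
    x ∉ S ∧ ∃ a ∈ (p3Interval G)^[m] S, ∃ b ∈ (p3Interval G)^[m] S,
      a ≠ b ∧ G.Adj x a ∧ G.Adj x b := by
  rw [Function.iterate_succ_apply'] at hx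
  rcases hx with hx | hx
  · exact absurd hx hx'
  · obtain ⟨a, ha, b, hb, hab, h1, h2⟩ := hx
    exact ⟨fun hS => hx' (iter_mono G S (Nat.zero_le m) hS), a, ha, b, hb, hab, h1, h2⟩

lemma descent {m : ℕ} (hm : 1 ≤ m) {x : V} (hx : x ∈ (p3Interval G)^[m + 1] S)
    (hx' : x ∉ (p3Interval G)^[m] S) :
    ∃ u, G.Adj x u ∧ u ∈ (p3Interval G)^[m] S ∧ u ∉ (p3Interval G)^[m - 1] S := by
  obtain ⟨-, a, ha, b, hb, hab, h1, h2⟩ := step_lemma G S hx hx'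
  by_cases haa : a ∈ (p3Interval G)^[m - 1] S
  · by_cases hbb : b ∈ (p3Interval G)^[m - 1] S
    · exfalso
      apply hx'
      have hEq : (p3Interval G)^[m] S = p3Interval G ((p3Interval G)^[m - 1] S) := by
        conv_lhs => rw [show m = (m - 1) + 1 by omega]
        rw [Function.iterate_succ_apply']
      rw [hEq]
      exact Or.inr ⟨a, haa, b, hbb, hab, h1, h2⟩
    · exact ⟨b, h2, hb, hbb⟩
  · exact ⟨a, h1, ha, haa⟩

attribute [local instance] Classical.propDecidable

noncomputable def descend (G : SimpleGraph V) (S : Set V) (k : ℕ) (w : V) : ℕ → V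
  | 0 => w
  | j + 1 =>
    if h : ∃ u, G.Adj (descend G S k w j) u ∧ u ∈ (p3Interval G)^[k - j - 1] S ∧
        u ∉ (p3Interval G)^[k - j - 2] S
    then h.choose else descend G S k w j

lemma descend_key (k : ℕ) (w : V)
    (hw1 : w ∈ (p3Interval G)^[k] S) (hw2 : w ∉ (p3Interval G)^[k - 1] S) :
    ∀ j, j ≤ k - 1 →
      ((descend G S k w j ∈ (p3Interval G)^[k - j] S ∧
        descend G S k w j ∉ (p3Interval G)^[k - j - 1] S) ∧
       (1 ≤ j → G.Adj (descend G S k w (j - 1)) (descend G S k w j))) := by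
  intro j
  induction j with
  | zero => exact fun _ => ⟨⟨hw1, hw2⟩, by omega⟩
  | succ j ih =>
    intro hj
    obtain ⟨⟨hm1, hm2⟩, -⟩ := ih (by omega)
    have hm : 1 ≤ k - j - 1 := by omega
    have hx : descend G S k w j ∈ (p3Interval G)^[(k - j - 1) + 1] S := by
      rwa [show (k - j - 1) + 1 = k - j by omega]
    obtain ⟨u, hu⟩ := descent G S hm hx hm2
    have hcond : ∃ u, G.Adj (descend G S k w j) u ∧ u ∈ (p3Interval G)^[k - j - 1] S ∧
        u ∉ (p3Interval G)^[k - j - 2] S := by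
      refine ⟨u, hu.1, hu.2.1, ?_⟩
      rw [show k - j - 2 = k - j - 1 - 1 by omega]
      exact hu.2.2
    have hdesc : descend G S k w (j + 1) = hcond.choose := by
      rw [descend, dif_pos hcond]
    have hspec := hcond.choose_spec
    rw [← hdesc] at hspec
    refine ⟨⟨?_, ?_⟩, fun _ => ?_⟩
    · rw [show k - (j + 1) = k - j - 1 by omega]
      exact hspec.2.1
    · rw [show k - (j + 1) - 1 = k - j - 2 by omega]
      exact hspec.2.2
    · exact hspec.1

end Aux

/-- if the P3 iteration time of `S` is at least `k ≥ 1`, then the subgraph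
`H` induced by the P3 convex hull of `S` contains a path `v 0, …, v (k-1)` of vertices
outside `S`, where `v 0` has two distinct neighbors in `S`, each `v i` with `i < k-1`
has degree at least 3 in `H`, and `v (k-1)` has degree at least 2 in `H`. -/
theorem stmt11 {V : Type*} [Fintype V] (G : SimpleGraph V) (S : Set V) (k : ℕ)
    (hk : 1 ≤ k) (h : k ≤ iterTimeSet (p3Interval G) S) :
    ∃ v : ℕ → V,
      (∀ i j, i < k → j < k → v i = v j → i = j) ∧
      (∀ i, i < k → v i ∈ convexHullOf (p3Interval G) S ∧ v i ∉ S) ∧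
      (∀ i, i + 1 < k → G.Adj (v i) (v (i + 1))) ∧
      (∃ a ∈ S, ∃ b ∈ S, a ≠ b ∧ G.Adj (v 0) a ∧ G.Adj (v 0) b) ∧
      (∀ i, i + 1 < k →
        3 ≤ {u | u ∈ convexHullOf (p3Interval G) S ∧ G.Adj (v i) u}.ncard) ∧
      2 ≤ {u | u ∈ convexHullOf (p3Interval G) S ∧ G.Adj (v (k - 1)) u}.ncard := by
  classical
  -- every iterate below k differs from the hull
  have hne : ∀ j < k, (p3Interval G)^[j] S ≠ convexHullOf (p3Interval G) S := by
    intro j hj heq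
    have h2 : iterTimeSet (p3Interval G) S ≤ j := Nat.sInf_le heq
    omega
  -- hence the (k-1)-st iterate is not yet stable
  have hne2 : (p3Interval G)^[k - 1] S ≠ (p3Interval G)^[k] S := by
    intro heq
    have hfix : p3Interval G ((p3Interval G)^[k - 1] S) ⊆ (p3Interval G)^[k - 1] S := by
      have h2 : (p3Interval G)^[(k - 1) + 1] S ⊆ (p3Interval G)^[k - 1] S := by
        rw [show (k - 1) + 1 = k by omega]
        exact heq.ge
      rwa [Function.iterate_succ_apply'] at h2
    have h1 : convexHullOf (p3Interval G) S ⊆ (p3Interval G)^[k - 1] S :=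
      Set.sInter_subset_of_mem ⟨iter_mono G S (Nat.zero_le _), hfix⟩
    exact hne (k - 1) (by omega) (subset_antisymm (iter_subset_hull G S _) h1)
  obtain ⟨w, hw1, hw2⟩ : ∃ w, w ∈ (p3Interval G)^[k] S ∧ w ∉ (p3Interval G)^[k - 1] S := by
    by_contra hc
    push_neg at hc
    exact hne2 (subset_antisymm (iter_mono G S (by omega)) hc)
  set v : ℕ → V := fun i => descend G S k w (k - 1 - i) with hv
  have key : ∀ i < k, v i ∈ (p3Interval G)^[i + 1] S ∧ v i ∉ (p3Interval G)^[i] S := by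
    intro i hi
    have h1 := (descend_key G S k w hw1 hw2 (k - 1 - i) (by omega)).1
    rw [show k - (k - 1 - i) = i + 1 by omega] at h1
    exact h1
  have adj : ∀ i, i + 1 < k → G.Adj (v i) (v (i + 1)) := by
    intro i hi
    have h1 := (descend_key G S k w hw1 hw2 (k - 1 - i) (by omega)).2 (by omega)
    have e : k - 1 - i - 1 = k - 1 - (i + 1) := by omega
    rw [e] at h1
    exact h1.symm
  have inj : ∀ i j, i < j → j < k → v i ≠ v j := by
    intro i j hij hj hEq
    have h1 := (key i (by omega)).1
    have h2 := (key j hj).2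
    exact h2 (hEq ▸ iter_mono G S (show i + 1 ≤ j by omega) h1)
  refine ⟨v, ?_, ?_, adj, ?_, ?_, ?_⟩
  · intro i j hi hj hEq
    rcases lt_trichotomy i j with hlt | hEq' | hlt
    · exact absurd hEq (inj i j hlt hj)
    · exact hEq'
    · exact absurd hEq.symm (inj j i hlt hi)
  · intro i hi
    obtain ⟨h1, h2⟩ := key i hi
    refine ⟨iter_subset_hull G S _ h1, fun hS => h2 ?_⟩
    exact iter_mono G S (Nat.zero_le i) hS
  · obtain ⟨h1, h2⟩ := key 0 (by omega)
    obtain ⟨-, a, ha, b, hb, hab, g1, g2⟩ := step_lemma G S h1 h2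
    exact ⟨a, ha, b, hb, hab, g1, g2⟩
  · intro i hi
    obtain ⟨h1, h2⟩ := key i (by omega)
    obtain ⟨-, a, ha, b, hb, hab, g1, g2⟩ := step_lemma G S h1 h2
    obtain ⟨hc1, hc2⟩ := key (i + 1) hi
    have hca : v (i + 1) ≠ a := fun hEq => hc2 (hEq ▸ iter_mono G S (by omega) ha)
    have hcb : v (i + 1) ≠ b := fun hEq => hc2 (hEq ▸ iter_mono G S (by omega) hb)
    have hsub : ({a, b, v (i + 1)} : Set V) ⊆
        {u | u ∈ convexHullOf (p3Interval G) S ∧ G.Adj (v i) u} := by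
      intro u hu
      rcases hu with rfl | rfl | rfl
      · exact ⟨iter_subset_hull G S _ ha, g1⟩
      · exact ⟨iter_subset_hull G S _ hb, g2⟩
      · exact ⟨iter_subset_hull G S _ hc1, adj i hi⟩
    have h3 : ({a, b, v (i + 1)} : Set V).ncard = 3 :=
      Set.ncard_eq_three.mpr ⟨a, b, v (i + 1), hab, Ne.symm hca, Ne.symm hcb, rfl⟩
    calc (3 : ℕ) = ({a, b, v (i + 1)} : Set V).ncard := h3.symm
      _ ≤ _ := Set.ncard_le_ncard hsub (Set.toFinite _)
  · obtain ⟨h1, h2⟩ := key (k - 1) (by omega)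
    have h1' : v (k - 1) ∈ (p3Interval G)^[(k - 1) + 1] S := by
      rw [show (k - 1) + 1 = k by omega]
      rwa [show (k - 1) + 1 = k by omega] at h1
    obtain ⟨-, a, ha, b, hb, hab, g1, g2⟩ := step_lemma G S h1' h2
    have hsub : ({a, b} : Set V) ⊆
        {u | u ∈ convexHullOf (p3Interval G) S ∧ G.Adj (v (k - 1)) u} := by
      intro u hu
      rcases hu with rfl | rfl
      · exact ⟨iter_subset_hull G S _ ha, g1⟩
      · exact ⟨iter_subset_hull G S _ hb, g2⟩
    calc (2 : ℕ) = ({a, b} : Set V).ncard := (Set.ncard_pair hab).symm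
      _ ≤ _ := Set.ncard_le_ncard hsub (Set.toFinite _)
end

section
/- Let G be a triangle-free graph with at least 3 vertices and let G_u be obtained from G by adding a universal vertex u. Then the general position number of G_u in the geodesic convexity equals max(gp_P3(G), ω(G) + 1), where gp_P3(G) is the P3 general position number of G and ω(G) is the clique number of G. -/
def p3GenPos {V : Type*} (G : SimpleGraph V) (S : Set V) : Prop :=
  ∀ x ∈ S, ∀ y ∈ S, ∀ z ∈ S, x ≠ y → z ≠ x → z ≠ y → z ∉ p3Interval G {x, y}

/-- The P3 general position number. -/
noncomputable def gpP3 {V : Type*} [Fintype V] (G : SimpleGraph V) : ℕ :=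
  sSup {m | ∃ S : Set V, p3GenPos G S ∧ S.ncard = m}

/-- Geodesic interval: vertices on shortest paths between vertices of `S`. -/
def geoInterval {V : Type*} (G : SimpleGraph V) (S : Set V) : Set V :=
  {v | ∃ x ∈ S, ∃ y ∈ S, ∃ p : G.Walk x y, p.IsPath ∧ p.length = G.dist x y ∧ v ∈ p.support}

def geoGenPos {V : Type*} (G : SimpleGraph V) (S : Set V) : Prop :=
  ∀ x ∈ S, ∀ y ∈ S, ∀ z ∈ S, x ≠ y → z ≠ x → z ≠ y → z ∉ geoInterval G {x, y}

/-- The geodesic general position number. -/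
noncomputable def gpGeo {V : Type*} [Fintype V] (G : SimpleGraph V) : ℕ :=
  sSup {m | ∃ S : Set V, geoGenPos G S ∧ S.ncard = m}

/-- The graph obtained from `G` by adding a universal vertex `none`. -/
def addUniversal {V : Type*} (G : SimpleGraph V) : SimpleGraph (Option V) :=
  SimpleGraph.fromRel (fun a b =>
    a = none ∨ ∃ u v : V, a = some u ∧ b = some v ∧ G.Adj u v)

section Aux

variable {V : Type*} {G : SimpleGraph V}

lemma aU_some_some {a b : V} :
    (addUniversal G).Adj (some a) (some b) ↔ G.Adj a b := by
  simp only [addUniversal, SimpleGraph.fromRel_adj]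
  constructor
  · rintro ⟨hne, (h|⟨u,v,hu,hv,huv⟩)|(h|⟨u,v,hu,hv,huv⟩)⟩
    · simp at h
    · cases hu; cases hv; exact huv
    · simp at h
    · cases hu; cases hv; exact huv.symm
  · intro h
    exact ⟨by simp [h.ne], Or.inl (Or.inr ⟨a, b, rfl, rfl, h⟩)⟩

lemma aU_none_some {a : V} : (addUniversal G).Adj none (some a) := by
  simp [addUniversal, SimpleGraph.fromRel_adj]

lemma aU_some_none {a : V} : (addUniversal G).Adj (some a) none :=
  aU_none_some.symm

lemma aU_dist_eq_two {x y : Option V} (hne : x ≠ y) (hna : ¬ (addUniversal G).Adj x y) :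
    (addUniversal G).dist x y = 2 := by
  obtain ⟨a, rfl⟩ : ∃ a, x = some a := by
    cases x with
    | none => cases y with
      | none => exact absurd rfl hne
      | some b => exact absurd aU_none_some hna
    | some a => exact ⟨a, rfl⟩
  obtain ⟨b, rfl⟩ : ∃ b, y = some b := by
    cases y with
    | none => exact absurd aU_some_none hna
    | some b => exact ⟨b, rfl⟩
  have hle : (addUniversal G).dist (some a) (some b) ≤ 2 := by
    have h := SimpleGraph.dist_le (G := addUniversal G)
      (SimpleGraph.Walk.cons (aU_some_none (a := a))
        (SimpleGraph.Walk.cons (aU_none_some (a := b)) SimpleGraph.Walk.nil))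
    exact le_trans h (by simp)
  have hreach : (addUniversal G).Reachable (some a) (some b) :=
    ⟨SimpleGraph.Walk.cons (aU_some_none (a := a))
      (SimpleGraph.Walk.cons (aU_none_some (a := b)) SimpleGraph.Walk.nil)⟩
  have hpos : 0 < (addUniversal G).dist (some a) (some b) := hreach.pos_dist_of_ne hne
  have h1 : (addUniversal G).dist (some a) (some b) ≠ 1 := by
    intro h; exact hna ((SimpleGraph.dist_eq_one_iff_adj).mp h)
  omega

lemma aU_dist_le_two (x y : Option V) : (addUniversal G).dist x y ≤ 2 := by
  by_cases hne : x = y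
  · simp [hne, SimpleGraph.dist_self]
  by_cases hadj : (addUniversal G).Adj x y
  · have := SimpleGraph.dist_eq_one_iff_adj.mpr hadj; omega
  · exact le_of_eq (aU_dist_eq_two hne hadj)

lemma aU_walk_support {a b z : Option V} (p : (addUniversal G).Walk a b)
    (hlen : p.length = (addUniversal G).dist a b) (hz : z ∈ p.support) :
    z = a ∨ z = b ∨ (a ≠ b ∧ ¬(addUniversal G).Adj a b ∧
      (addUniversal G).Adj a z ∧ (addUniversal G).Adj z b) := by
  have hle : p.length ≤ 2 := hlen ▸ aU_dist_le_two a b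
  cases p with
  | nil => simp at hz; exact Or.inl hz
  | cons h q =>
    cases q with
    | nil =>
      simp [SimpleGraph.Walk.support_cons] at hz
      tauto
    | @cons c d _ h' r =>
      cases r with
      | nil =>
        have hlen2 : (SimpleGraph.Walk.cons h (SimpleGraph.Walk.cons h' SimpleGraph.Walk.nil)).length = 2 := by simp
        have hd2 : (addUniversal G).dist a b = 2 := by rw [← hlen, hlen2]
        have hne : a ≠ b := by rintro rfl; simp [SimpleGraph.dist_self] at hd2
        have hnadj : ¬(addUniversal G).Adj a b := by
          intro hadj
          have := SimpleGraph.dist_eq_one_iff_adj.mpr hadj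
          omega
        simp [SimpleGraph.Walk.support_cons] at hz
        rcases hz with rfl | rfl | rfl
        · exact Or.inl rfl
        · exact Or.inr (Or.inr ⟨hne, hnadj, h, h'⟩)
        · exact Or.inr (Or.inl rfl)
      | cons h'' r' => simp [SimpleGraph.Walk.length_cons] at hle

lemma aU_mem_pair {x y z : Option V}
    (h : z ∈ geoInterval (addUniversal G) {x, y}) :
    z = x ∨ z = y ∨ (¬(addUniversal G).Adj x y ∧
      (addUniversal G).Adj x z ∧ (addUniversal G).Adj z y) := by
  obtain ⟨a, ha, b, hb, p, hp, hlen, hsup⟩ := h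
  have hcase := aU_walk_support p hlen hsup
  rcases ha with rfl | rfl <;> rcases hb with rfl | rfl
  · rcases hcase with h | h | ⟨hne, _⟩
    · exact Or.inl h
    · exact Or.inl h
    · exact absurd rfl hne
  · rcases hcase with h | h | ⟨_, hna, h1, h2⟩
    · exact Or.inl h
    · exact Or.inr (Or.inl h)
    · exact Or.inr (Or.inr ⟨hna, h1, h2⟩)
  · rcases hcase with h | h | ⟨_, hna, h1, h2⟩
    · exact Or.inr (Or.inl h)
    · exact Or.inl h
    · exact Or.inr (Or.inr ⟨fun hh => hna hh.symm, h2.symm, h1.symm⟩)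
  · rcases hcase with h | h | ⟨hne, _⟩
    · exact Or.inr (Or.inl h)
    · exact Or.inr (Or.inl h)
    · exact absurd rfl hne

lemma aU_mem_of_common {x y z : Option V} (hne : x ≠ y)
    (hna : ¬(addUniversal G).Adj x y) (h1 : (addUniversal G).Adj x z)
    (h2 : (addUniversal G).Adj z y) : z ∈ geoInterval (addUniversal G) {x, y} := by
  refine ⟨x, by simp, y, by simp, SimpleGraph.Walk.cons h1 (SimpleGraph.Walk.cons h2 SimpleGraph.Walk.nil), ?_, ?_, by simp⟩
  · rw [SimpleGraph.Walk.isPath_def]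
    simp [h1.ne, h2.ne, hne]
  · simp [aU_dist_eq_two hne hna]

end Aux

/-- for a triangle-free graph `G` with at least 3 vertices, the geodesic
general position number of `G` plus a universal vertex equals `max (gp_P3(G)) (ω(G)+1)`. -/
theorem stmt13 {V : Type*} [Fintype V] (G : SimpleGraph V)
    (htf : G.CliqueFree 3) (hV : 3 ≤ Fintype.card V) :
    gpGeo (addUniversal G) = max (gpP3 G) (G.cliqueNum + 1) := by
  classical
  have hAbdd : BddAbove {m | ∃ S : Set (Option V), geoGenPos (addUniversal G) S ∧ S.ncard = m} := by
    refine ⟨Fintype.card (Option V), ?_⟩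
    rintro m ⟨S, _, rfl⟩
    simpa [Set.ncard_univ] using Set.ncard_le_ncard (Set.subset_univ S) Set.finite_univ
  have hAne : {m | ∃ S : Set (Option V), geoGenPos (addUniversal G) S ∧ S.ncard = m}.Nonempty :=
    ⟨0, ∅, by intro x hx; simp at hx, by simp⟩
  have hP3bdd : BddAbove {m | ∃ S : Set V, p3GenPos G S ∧ S.ncard = m} := by
    refine ⟨Fintype.card V, ?_⟩
    rintro m ⟨S, _, rfl⟩
    simpa [Set.ncard_univ] using Set.ncard_le_ncard (Set.subset_univ S) Set.finite_univ
  have hP3ne : {m | ∃ S : Set V, p3GenPos G S ∧ S.ncard = m}.Nonempty :=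
    ⟨0, ∅, by intro x hx; simp at hx, by simp⟩
  -- gpP3 ≤ gpGeo
  obtain ⟨T, hT, hTcard⟩ : ∃ S : Set V, p3GenPos G S ∧ S.ncard = gpP3 G :=
    Nat.sSup_mem hP3ne hP3bdd
  have h1 : gpP3 G ≤ gpGeo (addUniversal G) := by
    apply le_csSup hAbdd
    refine ⟨some '' T, ?_, by
      rw [Set.ncard_image_of_injective _ (Option.some_injective V), hTcard]⟩
    rintro x hx y hy z hz hxy hzx hzy hmem
    obtain ⟨x', hx', rfl⟩ := hx
    obtain ⟨y', hy', rfl⟩ := hy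
    obtain ⟨z', hz', rfl⟩ := hz
    rcases aU_mem_pair hmem with h | h | ⟨hna, ha1, ha2⟩
    · exact hzx h
    · exact hzy h
    · have hax : G.Adj z' x' := (aU_some_some.mp ha1).symm
      have hay : G.Adj z' y' := aU_some_some.mp ha2
      exact hT x' hx' y' hy' z' hz' (fun e => hxy (by rw [e])) (fun e => hzx (by rw [e]))
        (fun e => hzy (by rw [e]))
        ((Set.mem_union _ _ _).mpr (Or.inr
          ⟨x', by simp, y', by simp, fun e => hxy (by rw [e]), hax, hay⟩))
  -- cliqueNum + 1 ≤ gpGeo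
  obtain ⟨Q, hQ⟩ := G.exists_isNClique_cliqueNum
  have h2 : G.cliqueNum + 1 ≤ gpGeo (addUniversal G) := by
    apply le_csSup hAbdd
    refine ⟨insert none (some '' (Q : Set V)), ?_, ?_⟩
    · have hadj : ∀ x ∈ insert none (some '' (Q : Set V)),
          ∀ y ∈ insert none (some '' (Q : Set V)), x ≠ y → (addUniversal G).Adj x y := by
        intro x hx y hy hxy
        simp only [Set.mem_insert_iff, Set.mem_image, Finset.mem_coe] at hx hy
        rcases hx with rfl | ⟨a, ha, rfl⟩
        · rcases hy with rfl | ⟨b, hb, rfl⟩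
          · exact absurd rfl hxy
          · exact aU_none_some
        · rcases hy with rfl | ⟨b, hb, rfl⟩
          · exact aU_some_none
          · exact aU_some_some.mpr (hQ.isClique ha hb (fun e => hxy (by rw [e])))
      rintro x hx y hy z hz hxy hzx hzy hmem
      rcases aU_mem_pair hmem with h | h | ⟨hna, _, _⟩
      · exact hzx h
      · exact hzy h
      · exact hna (hadj x hx y hy hxy)
    · rw [Set.ncard_insert_of_notMem (by simp),
        Set.ncard_image_of_injective _ (Option.some_injective V),
        Set.ncard_coe_finset, hQ.card_eq]
  -- upper bound
  have hub : ∀ m ∈ {m | ∃ S : Set (Option V), geoGenPos (addUniversal G) S ∧ S.ncard = m},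
      m ≤ max (gpP3 G) (G.cliqueNum + 1) := by
    rintro m ⟨S, hS, rfl⟩
    by_cases hu : (none : Option V) ∈ S
    · -- S = {none} ∪ some '' clique
      have hclique : G.IsClique {v | some v ∈ S} := by
        intro a ha b hb hab
        by_contra hnadj
        have hnadj' : ¬ (addUniversal G).Adj (some a) (some b) :=
          fun h => hnadj (aU_some_some.mp h)
        exact hS (some a) ha (some b) hb none hu (by simp [hab]) (by simp) (by simp)
          (aU_mem_of_common (by simp [hab]) hnadj' aU_some_none aU_none_some)
      have hSeq : S = insert none (some '' {v | some v ∈ S}) := by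
        ext x
        cases x with
        | none => simp [hu]
        | some v => simp
      have hfin : ({v | some v ∈ S} : Set V).Finite := Set.toFinite _
      have hcard : ({v | some v ∈ S} : Set V).ncard ≤ G.cliqueNum := by
        have htc : G.IsClique (hfin.toFinset : Set V) := by
          rw [Set.Finite.coe_toFinset]; exact hclique
        have := SimpleGraph.IsClique.card_le_cliqueNum (G := G) (t := hfin.toFinset) (tc := htc)
        rwa [← Set.ncard_eq_toFinset_card _ hfin] at this
      have hSn : S.ncard = ({v | some v ∈ S} : Set V).ncard + 1 := by
        conv_lhs => rw [hSeq]
        rw [Set.ncard_insert_of_notMem (by simp),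
          Set.ncard_image_of_injective _ (Option.some_injective V)]
      have hmax := le_max_right (gpP3 G) (G.cliqueNum + 1)
      omega
    · -- S ⊆ some '' V, corresponds to a p3 general position set
      have hSeq : S = some '' {v | some v ∈ S} := by
        ext x
        cases x with
        | none => simp [hu]
        | some v => simp
      have hT3 : p3GenPos G {v | some v ∈ S} := by
        intro x hx y hy z hz hxy hzx hzy hmem
        rcases hmem with hm | ⟨a, ha, b, hb, hab, hza, hzb⟩
        · rcases hm with rfl | rfl
          · exact hzx rfl
          · exact hzy rfl
        · have hzxy : G.Adj z x ∧ G.Adj z y := by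
            rcases ha with rfl | rfl <;> rcases hb with rfl | rfl
            · exact absurd rfl hab
            · exact ⟨hza, hzb⟩
            · exact ⟨hzb, hza⟩
            · exact absurd rfl hab
          have hnxy : ¬ G.Adj x y := by
            intro hxyadj
            exact htf {x, y, z}
              (SimpleGraph.is3Clique_triple_iff.mpr ⟨hxyadj, hzxy.1.symm, hzxy.2.symm⟩)
          exact hS (some x) hx (some y) hy (some z) hz (by simp [hxy]) (by simp [hzx])
            (by simp [hzy])
            (aU_mem_of_common (by simp [hxy])
              (fun h => hnxy (aU_some_some.mp h))
              (aU_some_some.mpr hzxy.1.symm) (aU_some_some.mpr hzxy.2))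
      have hle : ({v | some v ∈ S} : Set V).ncard ≤ gpP3 G :=
        le_csSup hP3bdd ⟨{v | some v ∈ S}, hT3, rfl⟩
      have hSn : S.ncard = ({v | some v ∈ S} : Set V).ncard := by
        conv_lhs => rw [hSeq]
        rw [Set.ncard_image_of_injective _ (Option.some_injective V)]
      have hmax := le_max_left (gpP3 G) (G.cliqueNum + 1)
      omega
  exact le_antisymm (csSup_le hAne hub) (max_le h1 h2)
end
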